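/- For every integer n ≥ 6 and every i ∈ {1,…,n}, let H be a connected induced subgraph of the subnetwork AN_n^i with exactly 3 vertices. Then H is either a 3-cycle (triangle) or a 2-path (path with three vertices and two edges); moreover, if H is a 3-cycle then |N(H)| = 3n − 12, and if H is a 2-path then 3n − 11 ≤ |N(H)| ≤ 3n − 10, where N(H) is the set of vertices of AN_n^i not in H that are adjacent in AN_n^i to some vertex of H. -/

import Mathlib

open SimpleGraph

/-- Vertices of the alternating group network: even permutations of `{1,…,n}`
(modeled as permutations of `Fin n` with sign `1`). A permutation `p` is viewed
as the sequence `p₁p₂⋯p_n` where `p_j` (the symbol in position `j`) is `p ⟨j-1,_⟩`. -/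
abbrev ANVertex (n : ℕ) : Type := {p : Equiv.Perm (Fin n) // Equiv.Perm.sign p = 1}

/-- The adjacency relation of the `n`-dimensional alternating group network `AN_n`
(positions are 1-based in the informal description; position `j` is `⟨j-1,_⟩ : Fin n`). -/
def ANAdj (n : ℕ) (p q : Equiv.Perm (Fin n)) : Prop :=
  ∃ hn : 3 ≤ n,
    ((p ⟨0, by omega⟩ = q ⟨1, by omega⟩ ∧ p ⟨1, by omega⟩ = q ⟨2, by omega⟩ ∧
      p ⟨2, by omega⟩ = q ⟨0, by omega⟩ ∧ ∀ j : Fin n, 3 ≤ (j : ℕ) → p j = q j) ∨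
     (p ⟨0, by omega⟩ = q ⟨2, by omega⟩ ∧ p ⟨1, by omega⟩ = q ⟨0, by omega⟩ ∧
      p ⟨2, by omega⟩ = q ⟨1, by omega⟩ ∧ ∀ j : Fin n, 3 ≤ (j : ℕ) → p j = q j) ∨
     (∃ i : Fin n, 3 ≤ (i : ℕ) ∧ p ⟨0, by omega⟩ = q ⟨1, by omega⟩ ∧
      p ⟨1, by omega⟩ = q ⟨0, by omega⟩ ∧ p ⟨2, by omega⟩ = q i ∧ p i = q ⟨2, by omega⟩ ∧
      ∀ j : Fin n, 3 ≤ (j : ℕ) → j ≠ i → p j = q j))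

/-- The `n`-dimensional alternating group network `AN_n`. -/
def AN (n : ℕ) : SimpleGraph (ANVertex n) where
  Adj x y := ANAdj n x.1 y.1
  symm := by
    refine ⟨?_⟩
    rintro x y ⟨hn, h⟩
    refine ⟨hn, ?_⟩
    rcases h with ⟨h1, h2, h3, h4⟩ | ⟨h1, h2, h3, h4⟩ | ⟨i, hi, h1, h2, h3, h4, h5⟩
    · exact Or.inr (Or.inl ⟨h3.symm, h1.symm, h2.symm, fun j hj => (h4 j hj).symm⟩)
    · exact Or.inl ⟨h2.symm, h3.symm, h1.symm, fun j hj => (h4 j hj).symm⟩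
    · exact Or.inr (Or.inr ⟨i, hi, h2.symm, h1.symm, h4.symm, h3.symm,
        fun j hj hji => (h5 j hj hji).symm⟩)
  loopless := by
    refine ⟨?_⟩
    rintro x ⟨hn, ⟨h1, -⟩ | ⟨h1, -⟩ | ⟨i, hi, h1, -⟩⟩ <;>
      simpa [Fin.ext_iff] using x.1.injective h1

/-- The `ℓ`-component connectivity `κ_ℓ(G)`: the minimum number of vertices whose
removal from `G` results in a graph with at least `ℓ` connected components or a
graph with fewer than `ℓ` vertices. -/
noncomputable def componentConnectivity {V : Type*} [Fintype V] (G : SimpleGraph V)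
    (l : ℕ) : ℕ :=
  sInf {k | ∃ F : Finset V, F.card = k ∧
    (l ≤ Nat.card ((G.induce (↑F : Set V)ᶜ).ConnectedComponent) ∨
     Fintype.card V - F.card < l)}

/-- The subnetwork `AN_n^i`: the set of vertices whose last symbol equals `i`. -/
def ANLayer (n : ℕ) (hn : 1 ≤ n) (i : Fin n) : Set (ANVertex n) :=
  {x | x.1 ⟨n - 1, by omega⟩ = i}

/-- `N(H)` for a set `S` of vertices of the subnetwork `AN_n^i`: the vertices of
`AN_n^i` not in `S` that are adjacent (within `AN_n^i`) to some vertex of `S`. -/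
def layerNbhd (n : ℕ) (hn : 1 ≤ n) (i : Fin n) (S : Set (ANVertex n)) : Set (ANVertex n) :=
  {z | z ∈ ANLayer n hn i ∧ z ∉ S ∧ ∃ x ∈ S, (AN n).Adj z x}

/-- A set of three mutually adjacent vertices of `AN_n` (a `3`-cycle). -/
def SetIsTriangle (n : ℕ) (S : Set (ANVertex n)) : Prop :=
  ∃ a b c : ANVertex n, S = {a, b, c} ∧
    (AN n).Adj a b ∧ (AN n).Adj b c ∧ (AN n).Adj a c

/-- A set of three vertices of `AN_n` inducing a `2`-path (two edges). -/
def SetIsTwoPath (n : ℕ) (S : Set (ANVertex n)) : Prop :=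
  ∃ a b c : ANVertex n, S = {a, b, c} ∧ a ≠ c ∧
    (AN n).Adj a b ∧ (AN n).Adj b c ∧ ¬ (AN n).Adj a c


open Equiv Equiv.Perm

variable {n : ℕ}

def pp (hn : 6 ≤ n) (k : ℕ) (hk : k < 6 := by omega) : Fin n := ⟨k, by omega⟩

def rot (hn : 6 ≤ n) : Equiv.Perm (Fin n) :=
  Equiv.swap (pp hn 0) (pp hn 1) * Equiv.swap (pp hn 0) (pp hn 2)

def tau (hn : 6 ≤ n) (i : Fin n) : Equiv.Perm (Fin n) :=
  Equiv.swap (pp hn 0) (pp hn 1) * Equiv.swap (pp hn 2) i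

section basic
variable (hn : 6 ≤ n)

lemma pp_ne {k l : ℕ} {hk : k < 6} {hl : l < 6} (h : k ≠ l) : pp hn k hk ≠ pp hn l hl := by
  simp [pp, Fin.ext_iff, h]

lemma ne_pp {j : Fin n} {k : ℕ} {hk : k < 6} (h : j.val ≠ k) : j ≠ pp hn k hk := by
  simp [pp, Fin.ext_iff, h]

lemma pp_ne' {j : Fin n} {k : ℕ} {hk : k < 6} (h : k ≠ j.val) : pp hn k hk ≠ j := by
  simp [pp, Fin.ext_iff, h]

lemma fin_cases (j : Fin n) : j = pp hn 0 ∨ j = pp hn 1 ∨ j = pp hn 2 ∨ 3 ≤ j.val := by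
  simp only [pp, Fin.ext_iff]; omega

lemma rot_p0 : rot hn (pp hn 0) = pp hn 2 := by
  simp [rot, Equiv.swap_apply_def, pp, Fin.ext_iff]

lemma rot_p1 : rot hn (pp hn 1) = pp hn 0 := by
  simp [rot, Equiv.swap_apply_def, pp, Fin.ext_iff]

lemma rot_p2 : rot hn (pp hn 2) = pp hn 1 := by
  simp [rot, Equiv.swap_apply_def, pp, Fin.ext_iff]

lemma rot_fix {j : Fin n} (hj : 3 ≤ j.val) : rot hn j = j := by
  have h0 : j ≠ pp hn 0 := ne_pp hn (by omega)
  have h1 : j ≠ pp hn 1 := ne_pp hn (by omega)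
  have h2 : j ≠ pp hn 2 := ne_pp hn (by omega)
  simp [rot, Equiv.swap_apply_of_ne_of_ne, h0, h1, h2]

lemma rotinv_p0 : (rot hn)⁻¹ (pp hn 0) = pp hn 1 := by
  rw [Equiv.Perm.inv_eq_iff_eq]; exact (rot_p1 hn).symm

lemma rotinv_p1 : (rot hn)⁻¹ (pp hn 1) = pp hn 2 := by
  rw [Equiv.Perm.inv_eq_iff_eq]; exact (rot_p2 hn).symm

lemma rotinv_p2 : (rot hn)⁻¹ (pp hn 2) = pp hn 0 := by
  rw [Equiv.Perm.inv_eq_iff_eq]; exact (rot_p0 hn).symm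

lemma rotinv_fix {j : Fin n} (hj : 3 ≤ j.val) : (rot hn)⁻¹ j = j := by
  rw [Equiv.Perm.inv_eq_iff_eq]; exact (rot_fix hn hj).symm

lemma tau_p0 {i : Fin n} (hi : 3 ≤ i.val) : tau hn i (pp hn 0) = pp hn 1 := by
  have h2 : pp hn 0 ≠ pp hn 2 := pp_ne hn (by omega)
  have hi0 : pp hn 0 ≠ i := pp_ne' hn (by omega)
  simp [tau, Equiv.swap_apply_of_ne_of_ne h2 hi0, Equiv.swap_apply_def]

lemma tau_p1 {i : Fin n} (hi : 3 ≤ i.val) : tau hn i (pp hn 1) = pp hn 0 := by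
  have h2 : pp hn 1 ≠ pp hn 2 := pp_ne hn (by omega)
  have hi0 : pp hn 1 ≠ i := pp_ne' hn (by omega)
  simp [tau, Equiv.swap_apply_of_ne_of_ne h2 hi0, Equiv.swap_apply_def]

lemma tau_p2 {i : Fin n} (hi : 3 ≤ i.val) : tau hn i (pp hn 2) = i := by
  have h0 : i ≠ pp hn 0 := ne_pp hn (by omega)
  have h1 : i ≠ pp hn 1 := ne_pp hn (by omega)
  simp [tau, Equiv.swap_apply_left, Equiv.swap_apply_of_ne_of_ne h0 h1]

lemma tau_self {i : Fin n} (hi : 3 ≤ i.val) : tau hn i i = pp hn 2 := by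
  have h0 : pp hn 2 ≠ pp hn 0 := pp_ne hn (by omega)
  have h1 : pp hn 2 ≠ pp hn 1 := pp_ne hn (by omega)
  simp [tau, Equiv.swap_apply_right, Equiv.swap_apply_of_ne_of_ne h0 h1]

lemma tau_fix {i : Fin n} (hi : 3 ≤ i.val) {j : Fin n} (hj : 3 ≤ j.val) (hji : j ≠ i) :
    tau hn i j = j := by
  have h0 : j ≠ pp hn 0 := ne_pp hn (by omega)
  have h1 : j ≠ pp hn 1 := ne_pp hn (by omega)
  have h2 : j ≠ pp hn 2 := ne_pp hn (by omega)
  simp [tau, Equiv.swap_apply_of_ne_of_ne, h0, h1, h2, hji]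

lemma sign_rot : Equiv.Perm.sign (rot hn) = 1 := by
  have h1 : pp hn 0 ≠ pp hn 1 := pp_ne hn (by omega)
  have h2 : pp hn 0 ≠ pp hn 2 := pp_ne hn (by omega)
  simp [rot, Equiv.Perm.sign_swap, h1, h2]

lemma sign_tau {i : Fin n} (hi : 3 ≤ i.val) : Equiv.Perm.sign (tau hn i) = 1 := by
  have h1 : pp hn 0 ≠ pp hn 1 := pp_ne hn (by omega)
  have h2 : pp hn 2 ≠ i := pp_ne' hn (by omega)
  simp [tau, Equiv.Perm.sign_swap, h1, h2]

end basic
section alg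
variable (hn : 6 ≤ n)

lemma rot_rot : rot hn * rot hn = (rot hn)⁻¹ := by
  apply Equiv.ext; intro j
  rcases fin_cases hn j with rfl | rfl | rfl | hj
  · simp [Equiv.Perm.mul_apply, rot_p0, rot_p2, rotinv_p0]
  · simp [Equiv.Perm.mul_apply, rot_p1, rot_p0, rotinv_p1]
  · simp [Equiv.Perm.mul_apply, rot_p2, rot_p1, rotinv_p2]
  · simp [Equiv.Perm.mul_apply, rot_fix hn hj, rotinv_fix hn hj]

lemma rotinv_rotinv : (rot hn)⁻¹ * (rot hn)⁻¹ = rot hn := by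
  have := rot_rot hn
  calc (rot hn)⁻¹ * (rot hn)⁻¹ = (rot hn * rot hn)⁻¹ := by rw [mul_inv_rev]
  _ = rot hn := by rw [this, inv_inv]

lemma tau_sq {i : Fin n} (hi : 3 ≤ i.val) : tau hn i * tau hn i = 1 := by
  apply Equiv.ext; intro j
  rcases fin_cases hn j with rfl | rfl | rfl | hj
  · simp [Equiv.Perm.mul_apply, tau_p0 hn hi, tau_p1 hn hi]
  · simp [Equiv.Perm.mul_apply, tau_p0 hn hi, tau_p1 hn hi]
  · simp [Equiv.Perm.mul_apply, tau_p2 hn hi, tau_self hn hi]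
  · by_cases hji : j = i
    · subst hji; simp [Equiv.Perm.mul_apply, tau_self hn hi, tau_p2 hn hi]
    · simp [Equiv.Perm.mul_apply, tau_fix hn hi hj hji]

lemma tau_inv {i : Fin n} (hi : 3 ≤ i.val) : (tau hn i)⁻¹ = tau hn i := by
  rw [inv_eq_iff_mul_eq_one]; exact tau_sq hn hi

lemma rot_ne_one : rot hn ≠ 1 := by
  intro h
  have := congrArg (fun f => f (pp hn 0)) h
  simp [rot_p0] at this
  exact pp_ne hn (by omega) this

lemma rot_ne_rotinv : rot hn ≠ (rot hn)⁻¹ := by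
  intro h
  have := congrArg (fun f => f (pp hn 0)) h
  simp [rot_p0, rotinv_p0] at this
  exact pp_ne hn (by omega) this

lemma rotinv_ne_one : (rot hn)⁻¹ ≠ 1 := by
  intro h
  have : rot hn = 1 := by rw [← inv_inv (rot hn), h]; simp
  exact rot_ne_one hn this

lemma tau_ne_one {i : Fin n} (hi : 3 ≤ i.val) : tau hn i ≠ 1 := by
  intro h
  have := congrArg (fun f => f (pp hn 0)) h
  simp [tau_p0 hn hi] at this
  exact pp_ne hn (by omega) this

lemma tau_ne_rot {i : Fin n} (hi : 3 ≤ i.val) : tau hn i ≠ rot hn := by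
  intro h
  have := congrArg (fun f => f (pp hn 0)) h
  simp [tau_p0 hn hi, rot_p0] at this
  exact pp_ne hn (by omega) this

lemma tau_ne_rotinv {i : Fin n} (hi : 3 ≤ i.val) : tau hn i ≠ (rot hn)⁻¹ := by
  intro h
  have : tau hn i i = (rot hn)⁻¹ i := congrFun (congrArg (fun f => f.toFun) h) i
  rw [tau_self hn hi, rotinv_fix hn hi] at this
  exact pp_ne' hn (by omega) this

lemma tau_injective {i j : Fin n} (hi : 3 ≤ i.val) (hj : 3 ≤ j.val)
    (h : tau hn i = tau hn j) : i = j := by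
  by_contra hne
  have : tau hn i i = tau hn j i := congrFun (congrArg (fun f => f.toFun) h) i
  rw [tau_self hn hi, tau_fix hn hj hi hne] at this
  exact pp_ne' hn (by omega) this

end alg
section gens
variable (hn : 6 ≤ n)

def IsGen (hn : 6 ≤ n) (g : Equiv.Perm (Fin n)) : Prop :=
  g = rot hn ∨ g = (rot hn)⁻¹ ∨ ∃ i : Fin n, 3 ≤ i.val ∧ g = tau hn i

def IsGen0 (hn : 6 ≤ n) (g : Equiv.Perm (Fin n)) : Prop :=
  g = rot hn ∨ g = (rot hn)⁻¹ ∨ ∃ i : Fin n, 3 ≤ i.val ∧ i.val ≤ n - 2 ∧ g = tau hn i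

lemma IsGen0.isGen {g : Equiv.Perm (Fin n)} (h : IsGen0 hn g) : IsGen hn g := by
  rcases h with h | h | ⟨i, hi, _, h⟩
  · exact Or.inl h
  · exact Or.inr (Or.inl h)
  · exact Or.inr (Or.inr ⟨i, hi, h⟩)

lemma IsGen.ne_one {g : Equiv.Perm (Fin n)} (h : IsGen hn g) : g ≠ 1 := by
  rcases h with rfl | rfl | ⟨i, hi, rfl⟩
  · exact rot_ne_one hn
  · exact rotinv_ne_one hn
  · exact tau_ne_one hn hi

lemma IsGen.sign {g : Equiv.Perm (Fin n)} (h : IsGen hn g) : Equiv.Perm.sign g = 1 := by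
  rcases h with rfl | rfl | ⟨i, hi, rfl⟩
  · exact sign_rot hn
  · simp [sign_rot hn]
  · exact sign_tau hn hi

lemma IsGen.inv {g : Equiv.Perm (Fin n)} (h : IsGen hn g) : IsGen hn g⁻¹ := by
  rcases h with rfl | rfl | ⟨i, hi, rfl⟩
  · exact Or.inr (Or.inl rfl)
  · exact Or.inl (by simp)
  · exact Or.inr (Or.inr ⟨i, hi, tau_inv hn hi⟩)

lemma IsGen0.inv {g : Equiv.Perm (Fin n)} (h : IsGen0 hn g) : IsGen0 hn g⁻¹ := by
  rcases h with rfl | rfl | ⟨i, hi, hi2, rfl⟩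
  · exact Or.inr (Or.inl rfl)
  · exact Or.inl (by simp)
  · exact Or.inr (Or.inr ⟨i, hi, hi2, tau_inv hn hi⟩)

lemma adj_iff (x y : ANVertex n) :
    (AN n).Adj x y ↔ ∃ g, IsGen hn g ∧ y.1 = x.1 * g := by
  constructor
  · rintro ⟨h3n, hc | hc | hc⟩
    · refine ⟨rot hn, Or.inl rfl, ?_⟩
      obtain ⟨h1, h2, h3, h4⟩ := hc
      have e1 : x.1 (pp hn 0) = y.1 (pp hn 1) := h1
      have e2 : x.1 (pp hn 1) = y.1 (pp hn 2) := h2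
      have e3 : x.1 (pp hn 2) = y.1 (pp hn 0) := h3
      apply Equiv.ext; intro j
      rcases fin_cases hn j with rfl | rfl | rfl | hj
      · rw [Equiv.Perm.mul_apply, rot_p0]; exact e3.symm
      · rw [Equiv.Perm.mul_apply, rot_p1]; exact e1.symm
      · rw [Equiv.Perm.mul_apply, rot_p2]; exact e2.symm
      · rw [Equiv.Perm.mul_apply, rot_fix hn hj]; exact (h4 j hj).symm
    · refine ⟨(rot hn)⁻¹, Or.inr (Or.inl rfl), ?_⟩
      obtain ⟨h1, h2, h3, h4⟩ := hc
      have e1 : x.1 (pp hn 0) = y.1 (pp hn 2) := h1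
      have e2 : x.1 (pp hn 1) = y.1 (pp hn 0) := h2
      have e3 : x.1 (pp hn 2) = y.1 (pp hn 1) := h3
      apply Equiv.ext; intro j
      rcases fin_cases hn j with rfl | rfl | rfl | hj
      · rw [Equiv.Perm.mul_apply, rotinv_p0]; exact e2.symm
      · rw [Equiv.Perm.mul_apply, rotinv_p1]; exact e3.symm
      · rw [Equiv.Perm.mul_apply, rotinv_p2]; exact e1.symm
      · rw [Equiv.Perm.mul_apply, rotinv_fix hn hj]; exact (h4 j hj).symm
    · obtain ⟨i, hi, h1, h2, h3, h4, h5⟩ := hc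
      refine ⟨tau hn i, Or.inr (Or.inr ⟨i, hi, rfl⟩), ?_⟩
      have e1 : x.1 (pp hn 0) = y.1 (pp hn 1) := h1
      have e2 : x.1 (pp hn 1) = y.1 (pp hn 0) := h2
      have e3 : x.1 (pp hn 2) = y.1 i := h3
      have e4 : x.1 i = y.1 (pp hn 2) := h4
      apply Equiv.ext; intro j
      by_cases hji : j = i
      · subst hji; rw [Equiv.Perm.mul_apply, tau_self hn hi]; exact e3.symm
      · rcases fin_cases hn j with rfl | rfl | rfl | hj
        · rw [Equiv.Perm.mul_apply, tau_p0 hn hi]; exact e2.symm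
        · rw [Equiv.Perm.mul_apply, tau_p1 hn hi]; exact e1.symm
        · rw [Equiv.Perm.mul_apply, tau_p2 hn hi]; exact e4.symm
        · rw [Equiv.Perm.mul_apply, tau_fix hn hi hj hji]; exact (h5 j hj hji).symm
  · rintro ⟨g, hg, hy⟩
    refine ⟨by omega, ?_⟩
    rcases hg with rfl | rfl | ⟨i, hi, rfl⟩
    · refine Or.inl ⟨?_, ?_, ?_, fun j hj => ?_⟩
      · show x.1 (pp hn 0) = y.1 (pp hn 1)
        rw [hy, Equiv.Perm.mul_apply, rot_p1]
      · show x.1 (pp hn 1) = y.1 (pp hn 2)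
        rw [hy, Equiv.Perm.mul_apply, rot_p2]
      · show x.1 (pp hn 2) = y.1 (pp hn 0)
        rw [hy, Equiv.Perm.mul_apply, rot_p0]
      · rw [hy, Equiv.Perm.mul_apply, rot_fix hn hj]
    · refine Or.inr (Or.inl ⟨?_, ?_, ?_, fun j hj => ?_⟩)
      · show x.1 (pp hn 0) = y.1 (pp hn 2)
        rw [hy, Equiv.Perm.mul_apply, rotinv_p2]
      · show x.1 (pp hn 1) = y.1 (pp hn 0)
        rw [hy, Equiv.Perm.mul_apply, rotinv_p0]
      · show x.1 (pp hn 2) = y.1 (pp hn 1)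
        rw [hy, Equiv.Perm.mul_apply, rotinv_p1]
      · rw [hy, Equiv.Perm.mul_apply, rotinv_fix hn hj]
    · refine Or.inr (Or.inr ⟨i, hi, ?_, ?_, ?_, ?_, fun j hj hji => ?_⟩)
      · show x.1 (pp hn 0) = y.1 (pp hn 1)
        rw [hy, Equiv.Perm.mul_apply, tau_p1 hn hi]
      · show x.1 (pp hn 1) = y.1 (pp hn 0)
        rw [hy, Equiv.Perm.mul_apply, tau_p0 hn hi]
      · show x.1 (pp hn 2) = y.1 i
        rw [hy, Equiv.Perm.mul_apply, tau_self hn hi]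
      · show x.1 i = y.1 (pp hn 2)
        rw [hy, Equiv.Perm.mul_apply, tau_p2 hn hi]
      · rw [hy, Equiv.Perm.mul_apply, tau_fix hn hi hj hji]

end gens
section classify
variable (hn : 6 ≤ n)

lemma gen_val_ge3 {h : Equiv.Perm (Fin n)} (hh : IsGen hn h) {j : Fin n} (hj : 3 ≤ j.val) :
    h j = j ∨ (h j = pp hn 2 ∧ h = tau hn j) := by
  rcases hh with rfl | rfl | ⟨i, hi, rfl⟩
  · exact Or.inl (rot_fix hn hj)
  · exact Or.inl (rotinv_fix hn hj)
  · by_cases hji : j = i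
    · subst hji; exact Or.inr ⟨tau_self hn hi, rfl⟩
    · exact Or.inl (tau_fix hn hi hj hji)

lemma pp_val {k : ℕ} {hk : k < 6} : (pp hn k hk).val = k := rfl

lemma prod_of_gens {g h k : Equiv.Perm (Fin n)} (hg : IsGen0 hn g) (hh : IsGen0 hn h)
    (hk : IsGen hn k) (e : h = g * k) :
    (g = rot hn ∧ h = (rot hn)⁻¹) ∨ (g = (rot hn)⁻¹ ∧ h = rot hn) := by
  rcases hg with rfl | rfl | ⟨j, hj, hj2, rfl⟩
  · -- g = rot
    rcases hk with rfl | rfl | ⟨l, hl, rfl⟩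
    · exact Or.inl ⟨rfl, by rw [e, rot_rot]⟩
    · exact absurd (by rw [e, mul_inv_cancel]) (IsGen.ne_one hn hh.isGen)
    · exfalso
      have hv : h l = rot hn (pp hn 2) := by rw [e, Equiv.Perm.mul_apply, tau_self hn hl]
      rw [rot_p2] at hv
      rcases gen_val_ge3 hn hh.isGen hl with h1 | ⟨h1, -⟩ <;> rw [h1] at hv
      · exact ne_pp hn (by omega) hv
      · exact pp_ne hn (by omega) hv
  · -- g = rot⁻¹
    rcases hk with rfl | rfl | ⟨l, hl, rfl⟩
    · exact absurd (by rw [e, inv_mul_cancel]) (IsGen.ne_one hn hh.isGen)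
    · exact Or.inr ⟨rfl, by rw [e, rotinv_rotinv]⟩
    · exfalso
      have hv : h l = (rot hn)⁻¹ (pp hn 2) := by rw [e, Equiv.Perm.mul_apply, tau_self hn hl]
      rw [rotinv_p2] at hv
      rcases gen_val_ge3 hn hh.isGen hl with h1 | ⟨h1, -⟩ <;> rw [h1] at hv
      · exact ne_pp hn (by omega) hv
      · exact pp_ne hn (by omega) hv
  · -- g = tau j
    exfalso
    rcases hk with rfl | rfl | ⟨l, hl, rfl⟩
    · have hv : h j = pp hn 2 := by
        rw [e, Equiv.Perm.mul_apply, rot_fix hn hj, tau_self hn hj]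
      rcases gen_val_ge3 hn hh.isGen hj with h1 | ⟨-, h1⟩
      · rw [h1] at hv; exact ne_pp hn (by omega) hv
      · rw [h1] at e
        exact rot_ne_one hn (left_eq_mul.mp e)
    · have hv : h j = pp hn 2 := by
        rw [e, Equiv.Perm.mul_apply, rotinv_fix hn hj, tau_self hn hj]
      rcases gen_val_ge3 hn hh.isGen hj with h1 | ⟨-, h1⟩
      · rw [h1] at hv; exact ne_pp hn (by omega) hv
      · rw [h1] at e
        exact rotinv_ne_one hn ((left_eq_mul.mp e))
    · by_cases hjl : j = l
      · subst hjl
        rw [tau_sq hn hj] at e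
        exact IsGen.ne_one hn hh.isGen e
      · have hv : h l = j := by
          rw [e, Equiv.Perm.mul_apply, tau_self hn hl, tau_p2 hn hj]
        rcases gen_val_ge3 hn hh.isGen hl with h1 | ⟨h1, -⟩ <;> rw [h1] at hv
        · exact hjl hv.symm
        · exact ne_pp hn (by omega) hv.symm
end classify
section factor
variable (hn : 6 ≤ n)

lemma factorA {r : Equiv.Perm (Fin n)} (hr : r = rot hn ∨ r = (rot hn)⁻¹) {m : Fin n}
    (hm : 3 ≤ m.val) {g k : Equiv.Perm (Fin n)} (hg : IsGen0 hn g) (hk : IsGen0 hn k)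
    (e : r * tau hn m = g * k) : g = r ∧ k = tau hn m := by
  have hr2 : (r (pp hn 2)).val ≤ 1 := by
    rcases hr with rfl | rfl
    · rw [rot_p2]; exact Nat.le_of_eq rfl |>.trans (by norm_num [pp_val])
    · rw [rotinv_p2]; norm_num [pp_val]
  have hv : r (pp hn 2) = (g * k) m := by
    rw [← e, Equiv.Perm.mul_apply, tau_self hn hm]
  rcases hg with rfl | rfl | ⟨j, hj, hj2, rfl⟩ <;>
    rcases hk with rfl | rfl | ⟨l, hl, hl2, rfl⟩
  · rw [Equiv.Perm.mul_apply, rot_fix hn hm, rot_fix hn hm] at hv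
    exact absurd (congrArg Fin.val hv) (by omega)
  · rw [Equiv.Perm.mul_apply, rotinv_fix hn hm, rot_fix hn hm] at hv
    exact absurd (congrArg Fin.val hv) (by omega)
  · by_cases hlm : l = m
    · subst hlm; exact ⟨(mul_right_cancel e).symm, rfl⟩
    · rw [Equiv.Perm.mul_apply, tau_fix hn hl hm (fun h => hlm h.symm), rot_fix hn hm] at hv
      exact absurd (congrArg Fin.val hv) (by omega)
  · rw [Equiv.Perm.mul_apply, rot_fix hn hm, rotinv_fix hn hm] at hv
    exact absurd (congrArg Fin.val hv) (by omega)
  · rw [Equiv.Perm.mul_apply, rotinv_fix hn hm, rotinv_fix hn hm] at hv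
    exact absurd (congrArg Fin.val hv) (by omega)
  · by_cases hlm : l = m
    · subst hlm; exact ⟨(mul_right_cancel e).symm, rfl⟩
    · rw [Equiv.Perm.mul_apply, tau_fix hn hl hm (fun h => hlm h.symm), rotinv_fix hn hm] at hv
      exact absurd (congrArg Fin.val hv) (by omega)
  · rw [Equiv.Perm.mul_apply, rot_fix hn hm] at hv
    by_cases hjm : j = m
    · subst hjm; rw [tau_self hn hj] at hv
      exact absurd (congrArg Fin.val hv) (by simp [pp_val]; omega)
    · rw [tau_fix hn hj hm (fun h => hjm h.symm)] at hv
      exact absurd (congrArg Fin.val hv) (by omega)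
  · rw [Equiv.Perm.mul_apply, rotinv_fix hn hm] at hv
    by_cases hjm : j = m
    · subst hjm; rw [tau_self hn hj] at hv
      exact absurd (congrArg Fin.val hv) (by simp [pp_val]; omega)
    · rw [tau_fix hn hj hm (fun h => hjm h.symm)] at hv
      exact absurd (congrArg Fin.val hv) (by omega)
  · rw [Equiv.Perm.mul_apply] at hv
    by_cases hlm : l = m
    · subst hlm; rw [tau_self hn hl, tau_p2 hn hj] at hv
      exact absurd (congrArg Fin.val hv) (by omega)
    · rw [tau_fix hn hl hm (fun h => hlm h.symm)] at hv
      by_cases hjm : j = m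
      · subst hjm; rw [tau_self hn hj] at hv
        exact absurd (congrArg Fin.val hv) (by simp [pp_val]; omega)
      · rw [tau_fix hn hj hm (fun h => hjm h.symm)] at hv
        exact absurd (congrArg Fin.val hv) (by omega)

lemma factorB {l m : Fin n} (hl : 3 ≤ l.val) (hm : 3 ≤ m.val) (hlm : l ≠ m)
    {g k : Equiv.Perm (Fin n)} (hg : IsGen0 hn g) (hk : IsGen0 hn k)
    (e : tau hn l * tau hn m = g * k) : g = tau hn l ∧ k = tau hn m := by
  have hv : (l : Fin n) = (g * k) m := by
    rw [← e, Equiv.Perm.mul_apply, tau_self hn hm, tau_p2 hn hl]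
  rcases hg with rfl | rfl | ⟨j, hj, hj2, rfl⟩ <;>
    rcases hk with rfl | rfl | ⟨j', hj', hj'2, rfl⟩
  · rw [Equiv.Perm.mul_apply, rot_fix hn hm, rot_fix hn hm] at hv
    exact absurd hv hlm
  · rw [Equiv.Perm.mul_apply, rotinv_fix hn hm, rot_fix hn hm] at hv
    exact absurd hv hlm
  · exfalso
    rw [Equiv.Perm.mul_apply] at hv
    by_cases hj'm : j' = m
    · subst hj'm; rw [tau_self hn hj', rot_p2] at hv
      exact absurd (congrArg Fin.val hv) (by simp [pp_val]; omega)
    · rw [tau_fix hn hj' hm (fun h => hj'm h.symm), rot_fix hn hm] at hv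
      exact hlm hv
  · rw [Equiv.Perm.mul_apply, rot_fix hn hm, rotinv_fix hn hm] at hv
    exact absurd hv hlm
  · rw [Equiv.Perm.mul_apply, rotinv_fix hn hm, rotinv_fix hn hm] at hv
    exact absurd hv hlm
  · exfalso
    rw [Equiv.Perm.mul_apply] at hv
    by_cases hj'm : j' = m
    · subst hj'm; rw [tau_self hn hj', rotinv_p2] at hv
      exact absurd (congrArg Fin.val hv) (by simp [pp_val]; omega)
    · rw [tau_fix hn hj' hm (fun h => hj'm h.symm), rotinv_fix hn hm] at hv
      exact hlm hv
  · exfalso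
    rw [Equiv.Perm.mul_apply, rot_fix hn hm] at hv
    by_cases hjm : j = m
    · subst hjm; rw [tau_self hn hj] at hv
      exact absurd (congrArg Fin.val hv) (by simp [pp_val]; omega)
    · rw [tau_fix hn hj hm (fun h => hjm h.symm)] at hv
      exact hlm hv
  · exfalso
    rw [Equiv.Perm.mul_apply, rotinv_fix hn hm] at hv
    by_cases hjm : j = m
    · subst hjm; rw [tau_self hn hj] at hv
      exact absurd (congrArg Fin.val hv) (by simp [pp_val]; omega)
    · rw [tau_fix hn hj hm (fun h => hjm h.symm)] at hv
      exact hlm hv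
  · rw [Equiv.Perm.mul_apply] at hv
    by_cases hj'm : j' = m
    · subst hj'm
      rw [tau_self hn hj'] at hv
      by_cases hjl : j = l
      · subst hjl
        exact ⟨rfl, mul_left_cancel e⟩
      · rw [tau_p2 hn hj] at hv
        exact absurd hv.symm hjl
    · rw [tau_fix hn hj' hm (fun h => hj'm h.symm)] at hv
      by_cases hjm : j = m
      · subst hjm; rw [tau_self hn hj] at hv
        exact absurd (congrArg Fin.val hv) (by simp [pp_val]; omega)
      · rw [tau_fix hn hj hm (fun h => hjm h.symm)] at hv
        exact absurd hv hlm

end factor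
def pl (hn : 6 ≤ n) : Fin n := ⟨n - 1, by omega⟩

def idxF (hn : 6 ≤ n) : Finset (Fin n) :=
  Finset.univ.filter (fun i => 3 ≤ i.val ∧ i.val ≤ n - 2)

def G0 (hn : 6 ≤ n) : Finset (Equiv.Perm (Fin n)) :=
  insert (rot hn) (insert (rot hn)⁻¹ ((idxF hn).image (tau hn)))

def trG (s : Equiv.Perm (Fin n)) (F : Finset (Equiv.Perm (Fin n))) :
    Finset (Equiv.Perm (Fin n)) := F.image (fun g => s * g)

section layer
variable (hn : 6 ≤ n)

lemma pl_ge3 : 3 ≤ (pl hn).val := by simp [pl]; omega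

lemma IsGen0.fix_pl {g : Equiv.Perm (Fin n)} (h : IsGen0 hn g) : g (pl hn) = pl hn := by
  rcases h with rfl | rfl | ⟨i, hi, hi2, rfl⟩
  · exact rot_fix hn (pl_ge3 hn)
  · exact rotinv_fix hn (pl_ge3 hn)
  · refine tau_fix hn hi (pl_ge3 hn) ?_
    intro h
    have : (pl hn).val = i.val := congrArg Fin.val h
    simp [pl] at this
    omega

lemma mem_layer_iff {h1 : 1 ≤ n} {i : Fin n} {x : ANVertex n} :
    x ∈ ANLayer n h1 i ↔ x.1 (pl hn) = i := Iff.rfl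

lemma adj_layer {h1 : 1 ≤ n} {i : Fin n} {x y : ANVertex n} (hx : x ∈ ANLayer n h1 i)
    (hy : y ∈ ANLayer n h1 i) :
    (AN n).Adj x y ↔ ∃ g, IsGen0 hn g ∧ y.1 = x.1 * g := by
  rw [adj_iff hn]
  constructor
  · rintro ⟨g, hg, hyx⟩
    rw [mem_layer_iff hn] at hx hy
    have hfix : g (pl hn) = pl hn := by
      apply x.1.injective
      rw [← Equiv.Perm.mul_apply, ← hyx, hy, hx]
    refine ⟨g, ?_, hyx⟩
    rcases hg with rfl | rfl | ⟨i', hi', rfl⟩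
    · exact Or.inl rfl
    · exact Or.inr (Or.inl rfl)
    · refine Or.inr (Or.inr ⟨i', hi', ?_, rfl⟩)
      by_contra hgt
      have hieq : i' = pl hn := by
        have hlt := i'.isLt
        exact Fin.ext (show i'.val = n - 1 by omega)
      rw [hieq, tau_self hn (pl_ge3 hn)] at hfix
      have h2 : (2 : ℕ) = n - 1 := congrArg Fin.val hfix
      omega
  · rintro ⟨g, hg, hyx⟩
    exact ⟨g, hg.isGen hn, hyx⟩

lemma mem_idxF {i : Fin n} : i ∈ idxF hn ↔ 3 ≤ i.val ∧ i.val ≤ n - 2 := by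
  simp [idxF]

lemma card_idxF : (idxF hn).card = n - 4 := by
  have himg : (idxF hn).image Fin.val = Finset.Ico 3 (n - 1) := by
    ext k
    simp only [Finset.mem_image, mem_idxF hn, Finset.mem_Ico]
    constructor
    · rintro ⟨i, ⟨h3, h2⟩, rfl⟩; omega
    · rintro ⟨h3, h2⟩
      refine ⟨⟨k, by omega⟩, ⟨?_, ?_⟩, rfl⟩ <;> simp <;> omega
  have := Finset.card_image_of_injective (idxF hn) Fin.val_injective
  rw [himg, Nat.card_Ico] at this
  omega

lemma mem_G0 {g : Equiv.Perm (Fin n)} : g ∈ G0 hn ↔ IsGen0 hn g := by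
  simp only [G0, Finset.mem_insert, Finset.mem_image, mem_idxF hn, IsGen0]
  constructor
  · rintro (rfl | rfl | ⟨i, ⟨h3, h2⟩, rfl⟩)
    · exact Or.inl rfl
    · exact Or.inr (Or.inl rfl)
    · exact Or.inr (Or.inr ⟨i, h3, h2, rfl⟩)
  · rintro (rfl | rfl | ⟨i, h3, h2, rfl⟩)
    · exact Or.inl rfl
    · exact Or.inr (Or.inl rfl)
    · exact Or.inr (Or.inr ⟨i, ⟨h3, h2⟩, rfl⟩)

lemma card_G0 : (G0 hn).card = n - 2 := by
  have himg : ((idxF hn).image (tau hn)).card = n - 4 := by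
    rw [Finset.card_image_of_injOn, card_idxF hn]
    intro i hi j hj hij
    exact tau_injective hn ((mem_idxF hn).1 hi).1 ((mem_idxF hn).1 hj).1 hij
  rw [G0, Finset.card_insert_of_notMem, Finset.card_insert_of_notMem, himg]
  · omega
  · simp only [Finset.mem_image]
    rintro ⟨i, hi, heq⟩
    exact tau_ne_rotinv hn ((mem_idxF hn).1 hi).1 heq
  · simp only [Finset.mem_insert, Finset.mem_image]
    rintro (h | ⟨i, hi, heq⟩)
    · exact rot_ne_rotinv hn h
    · exact tau_ne_rot hn ((mem_idxF hn).1 hi).1 heq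

lemma card_trG (s : Equiv.Perm (Fin n)) (F : Finset (Equiv.Perm (Fin n))) :
    (trG s F).card = F.card :=
  Finset.card_image_of_injective F (mul_right_injective s)

lemma mem_trG {s x : Equiv.Perm (Fin n)} {F : Finset (Equiv.Perm (Fin n))} :
    x ∈ trG s F ↔ ∃ g ∈ F, x = s * g := by
  simp only [trG, Finset.mem_image]
  constructor
  · rintro ⟨g, hg, rfl⟩; exact ⟨g, hg, rfl⟩
  · rintro ⟨g, hg, rfl⟩; exact ⟨g, hg, rfl⟩

end layer
section inter
variable (hn : 6 ≤ n)

lemma rotinv_mem_cases (hs : s = rot hn ∨ s = (rot hn)⁻¹) :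
    s⁻¹ = rot hn ∨ s⁻¹ = (rot hn)⁻¹ := by
  rcases hs with rfl | rfl
  · exact Or.inr rfl
  · exact Or.inl (inv_inv _)

lemma rot_isGen0 (hs : s = rot hn ∨ s = (rot hn)⁻¹) : IsGen0 hn s := by
  rcases hs with rfl | rfl
  · exact Or.inl rfl
  · exact Or.inr (Or.inl rfl)

lemma sq_of_rot (hs : s = rot hn ∨ s = (rot hn)⁻¹) : s⁻¹ * s⁻¹ ∈ G0 hn := by
  rcases hs with rfl | rfl
  · rw [rotinv_rotinv hn, mem_G0 hn]; exact Or.inl rfl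
  · rw [inv_inv, rot_rot hn, mem_G0 hn]; exact Or.inr (Or.inl rfl)

lemma inter_G0_rot {s : Equiv.Perm (Fin n)} (hs : s = rot hn ∨ s = (rot hn)⁻¹) :
    G0 hn ∩ trG s (G0 hn) = {s⁻¹} := by
  ext x
  simp only [Finset.mem_inter, Finset.mem_singleton, mem_trG]
  constructor
  · rintro ⟨hx, g, hg, rfl⟩
    rcases prod_of_gens hn (rot_isGen0 hn hs) ((mem_G0 hn).1 hx)
        (IsGen0.isGen hn ((mem_G0 hn).1 hg)) rfl with ⟨rfl, h2⟩ | ⟨rfl, h2⟩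
    · rw [h2]
    · rw [h2, inv_inv]
  · rintro rfl
    refine ⟨?_, s⁻¹ * s⁻¹, sq_of_rot hn hs, by group⟩
    rw [mem_G0 hn]
    rcases hs with rfl | rfl
    · exact Or.inr (Or.inl rfl)
    · rw [inv_inv]; exact Or.inl rfl

lemma inter_G0_tau {m : Fin n} (hm : 3 ≤ m.val) (hm2 : m.val ≤ n - 2) :
    G0 hn ∩ trG (tau hn m) (G0 hn) = ∅ := by
  ext x
  simp only [Finset.mem_inter, Finset.notMem_empty, iff_false, not_and, mem_trG]
  intro hx
  rintro ⟨g, hg, rfl⟩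
  rcases prod_of_gens hn (Or.inr (Or.inr ⟨m, hm, hm2, rfl⟩)) ((mem_G0 hn).1 hx)
      (IsGen0.isGen hn ((mem_G0 hn).1 hg)) rfl with ⟨h1, -⟩ | ⟨h1, -⟩
  · exact tau_ne_rot hn hm h1
  · exact tau_ne_rotinv hn hm h1

lemma inter_rot_rotinv :
    trG (rot hn) (G0 hn) ∩ trG ((rot hn)⁻¹) (G0 hn) = {1} := by
  ext x
  simp only [Finset.mem_inter, Finset.mem_singleton, mem_trG]
  constructor
  · rintro ⟨⟨g, hg, rfl⟩, ⟨h, hh, heq⟩⟩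
    have e : h = (rot hn)⁻¹ * g := by
      have h1 : h = rot hn * (rot hn * g) := by rw [heq]; group
      rw [h1, ← mul_assoc, rot_rot hn]
    rcases prod_of_gens hn (Or.inr (Or.inl rfl)) ((mem_G0 hn).1 hh)
        (IsGen0.isGen hn ((mem_G0 hn).1 hg)) e with ⟨h1, -⟩ | ⟨-, h2⟩
    · exact absurd h1.symm (rot_ne_rotinv hn)
    · -- h = rot
      rw [h2] at heq
      rw [heq]; group
  · rintro rfl
    exact ⟨⟨(rot hn)⁻¹, by rw [mem_G0 hn]; exact Or.inr (Or.inl rfl), by group⟩,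
      ⟨rot hn, by rw [mem_G0 hn]; exact Or.inl rfl, by group⟩⟩

lemma inter_rot_tau {s : Equiv.Perm (Fin n)} (hs : s = rot hn ∨ s = (rot hn)⁻¹)
    {m : Fin n} (hm : 3 ≤ m.val) (hm2 : m.val ≤ n - 2) :
    trG s (G0 hn) ∩ trG (tau hn m) (G0 hn) = {1} := by
  ext x
  simp only [Finset.mem_inter, Finset.mem_singleton, mem_trG]
  constructor
  · rintro ⟨⟨g, hg, rfl⟩, ⟨h, hh, heq⟩⟩
    have e2 : s⁻¹ * tau hn m = g * h⁻¹ := by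
      calc s⁻¹ * tau hn m = s⁻¹ * (tau hn m * h) * h⁻¹ := by group
      _ = s⁻¹ * (s * g) * h⁻¹ := by rw [← heq]
      _ = g * h⁻¹ := by group
    obtain ⟨hg1, -⟩ := factorA hn (rotinv_mem_cases hn hs) hm ((mem_G0 hn).1 hg)
      (IsGen0.inv hn ((mem_G0 hn).1 hh)) e2
    rw [hg1]; group
  · rintro rfl
    refine ⟨⟨s⁻¹, ?_, by group⟩, ⟨tau hn m, ?_, (tau_sq hn hm).symm⟩⟩
    · rw [mem_G0 hn]; exact rot_isGen0 hn (rotinv_mem_cases hn hs)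
    · rw [mem_G0 hn]; exact Or.inr (Or.inr ⟨m, hm, hm2, rfl⟩)

lemma inter_tau_tau {l m : Fin n} (hl : 3 ≤ l.val) (hl2 : l.val ≤ n - 2)
    (hm : 3 ≤ m.val) (hm2 : m.val ≤ n - 2) (hlm : l ≠ m) :
    trG (tau hn l) (G0 hn) ∩ trG (tau hn m) (G0 hn) = {1} := by
  ext x
  simp only [Finset.mem_inter, Finset.mem_singleton, mem_trG]
  constructor
  · rintro ⟨⟨g, hg, rfl⟩, ⟨h, hh, heq⟩⟩
    have e2 : tau hn m * tau hn l = h * g⁻¹ := by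
      calc tau hn m * tau hn l = tau hn m * (tau hn l * g) * g⁻¹ := by group
      _ = tau hn m * (tau hn m * h) * g⁻¹ := by rw [← heq]
      _ = (tau hn m * tau hn m) * h * g⁻¹ := by group
      _ = h * g⁻¹ := by rw [tau_sq hn hm]; group
    obtain ⟨-, hg1⟩ := factorB hn hm hl (fun h => hlm h.symm) ((mem_G0 hn).1 hh)
      (IsGen0.inv hn ((mem_G0 hn).1 hg)) e2
    have : g = tau hn l := by rw [← inv_inv g, hg1, tau_inv hn hl]
    rw [this, tau_sq hn hl]
  · rintro rfl
    refine ⟨⟨tau hn l, ?_, (tau_sq hn hl).symm⟩, ⟨tau hn m, ?_, (tau_sq hn hm).symm⟩⟩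
    · rw [mem_G0 hn]; exact Or.inr (Or.inr ⟨l, hl, hl2, rfl⟩)
    · rw [mem_G0 hn]; exact Or.inr (Or.inr ⟨m, hm, hm2, rfl⟩)

end inter
def XF (hn : 6 ≤ n) (s t : Equiv.Perm (Fin n)) : Finset (Equiv.Perm (Fin n)) :=
  (G0 hn ∪ trG s (G0 hn) ∪ trG t (G0 hn)) \ {1, s, t}

section cardx
variable (hn : 6 ≤ n)

lemma XF_comm (s t : Equiv.Perm (Fin n)) : XF hn s t = XF hn t s := by
  unfold XF
  rw [Finset.union_assoc, Finset.union_comm (trG s (G0 hn)), ← Finset.union_assoc,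
    Finset.pair_comm s t]

lemma one_mem_trG {s : Equiv.Perm (Fin n)} (hs : IsGen0 hn s) :
    (1 : Equiv.Perm (Fin n)) ∈ trG s (G0 hn) := by
  rw [mem_trG]
  exact ⟨s⁻¹, (mem_G0 hn).2 (IsGen0.inv hn hs), (mul_inv_cancel s).symm⟩

lemma card_XF {s t : Equiv.Perm (Fin n)} (hs0 : IsGen0 hn s) (ht0 : IsGen0 hn t)
    (hst : s ≠ t) (I1 I2 : Finset (Equiv.Perm (Fin n)))
    (h1 : G0 hn ∩ trG s (G0 hn) = I1)
    (h2 : (G0 hn ∪ trG s (G0 hn)) ∩ trG t (G0 hn) = I2) :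
    (XF hn s t).card + I1.card + I2.card + 3 = 3 * (n - 2) := by
  have hsub : ({1, s, t} : Finset (Equiv.Perm (Fin n)))
      ⊆ G0 hn ∪ trG s (G0 hn) ∪ trG t (G0 hn) := by
    intro x hx
    simp only [Finset.mem_insert, Finset.mem_singleton] at hx
    rcases hx with rfl | rfl | rfl
    · exact Finset.mem_union_left _ (Finset.mem_union_right _ (one_mem_trG hn hs0))
    · exact Finset.mem_union_left _ (Finset.mem_union_left _ ((mem_G0 hn).2 hs0))
    · exact Finset.mem_union_left _ (Finset.mem_union_left _ ((mem_G0 hn).2 ht0))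
  have hc3 : ({1, s, t} : Finset (Equiv.Perm (Fin n))).card = 3 := by
    rw [Finset.card_insert_of_notMem, Finset.card_insert_of_notMem, Finset.card_singleton]
    · simp [hst]
    · simp only [Finset.mem_insert, Finset.mem_singleton]
      push_neg
      exact ⟨fun h => (IsGen.ne_one hn (hs0.isGen hn)) h.symm,
        fun h => (IsGen.ne_one hn (ht0.isGen hn)) h.symm⟩
  have e1 := Finset.card_union_add_card_inter (G0 hn) (trG s (G0 hn))
  have e2 := Finset.card_union_add_card_inter (G0 hn ∪ trG s (G0 hn)) (trG t (G0 hn))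
  rw [h1] at e1
  rw [h2] at e2
  have hge := Finset.card_le_card hsub
  rw [hc3] at hge
  have ed := Finset.card_sdiff_of_subset hsub
  rw [hc3] at ed
  have hG := card_G0 hn
  have ht1 := card_trG s (G0 hn)
  have ht2 := card_trG t (G0 hn)
  have hXF : (XF hn s t).card = (G0 hn ∪ trG s (G0 hn) ∪ trG t (G0 hn)).card - 3 := ed
  omega

lemma cardXA {s : Equiv.Perm (Fin n)} (hs : s = rot hn ∨ s = (rot hn)⁻¹)
    {m : Fin n} (hm : 3 ≤ m.val) (hm2 : m.val ≤ n - 2) :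
    (XF hn s (tau hn m)).card = 3 * n - 11 := by
  have hst : s ≠ tau hn m := by
    rcases hs with rfl | rfl
    · exact fun h => tau_ne_rot hn hm h.symm
    · exact fun h => tau_ne_rotinv hn hm h.symm
  have h2 : (G0 hn ∪ trG s (G0 hn)) ∩ trG (tau hn m) (G0 hn) = {1} := by
    rw [Finset.union_inter_distrib_right, inter_G0_tau hn hm hm2,
      inter_rot_tau hn hs hm hm2]
    simp
  have := card_XF hn (rot_isGen0 hn hs) (Or.inr (Or.inr ⟨m, hm, hm2, rfl⟩)) hst
    {s⁻¹} {1} (inter_G0_rot hn hs) h2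
  simp only [Finset.card_singleton] at this
  omega

lemma cardXB {l m : Fin n} (hl : 3 ≤ l.val) (hl2 : l.val ≤ n - 2)
    (hm : 3 ≤ m.val) (hm2 : m.val ≤ n - 2) (hlm : l ≠ m) :
    (XF hn (tau hn l) (tau hn m)).card = 3 * n - 10 := by
  have hst : tau hn l ≠ tau hn m := by
    intro h; exact hlm (tau_injective hn hl hm h)
  have h2 : (G0 hn ∪ trG (tau hn l) (G0 hn)) ∩ trG (tau hn m) (G0 hn) = {1} := by
    rw [Finset.union_inter_distrib_right, inter_G0_tau hn hm hm2,
      inter_tau_tau hn hl hl2 hm hm2 hlm]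
    simp
  have := card_XF hn (Or.inr (Or.inr ⟨l, hl, hl2, rfl⟩)) (Or.inr (Or.inr ⟨m, hm, hm2, rfl⟩))
    hst ∅ {1} (inter_G0_tau hn hl hl2) h2
  simp only [Finset.card_singleton, Finset.card_empty] at this
  omega

lemma cardXT : (XF hn (rot hn) ((rot hn)⁻¹)).card = 3 * n - 12 := by
  have h1 : G0 hn ∩ trG (rot hn) (G0 hn) = {(rot hn)⁻¹} := inter_G0_rot hn (Or.inl rfl)
  have h2 : (G0 hn ∪ trG (rot hn) (G0 hn)) ∩ trG ((rot hn)⁻¹) (G0 hn)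
      = {rot hn, 1} := by
    rw [Finset.union_inter_distrib_right, inter_rot_rotinv hn]
    have := inter_G0_rot hn (Or.inr rfl : (rot hn)⁻¹ = rot hn ∨ (rot hn)⁻¹ = (rot hn)⁻¹)
    rw [this, inv_inv]
    rfl
  have hc2 : ({rot hn, 1} : Finset (Equiv.Perm (Fin n))).card = 2 := by
    rw [Finset.card_insert_of_notMem, Finset.card_singleton]
    simp [rot_ne_one hn]
  have := card_XF hn (Or.inl rfl) (Or.inr (Or.inl rfl)) (rot_ne_rotinv hn)
    {(rot hn)⁻¹} {rot hn, 1} h1 h2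
  simp only [Finset.card_singleton] at this
  rw [hc2] at this
  omega

end cardx
section nbhd
variable (hn : 6 ≤ n)

lemma nbhd_val {h1 : 1 ≤ n} {i : Fin n} {S : Set (ANVertex n)}
    (hS : S ⊆ ANLayer n h1 i) (b1 : Equiv.Perm (Fin n)) (W : Finset (Equiv.Perm (Fin n)))
    (hone : (1 : Equiv.Perm (Fin n)) ∈ W)
    (hWpl : ∀ w ∈ W, w (pl hn) = pl hn)
    (hWsign : ∀ w ∈ W, Equiv.Perm.sign w = 1)
    (hSval : Subtype.val '' S = (fun g => b1 * g) '' ↑W) :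
    Subtype.val '' (layerNbhd n h1 i S)
      = (fun g => b1 * g) '' ↑(W.biUnion (fun w => trG w (G0 hn)) \ W) := by
  have hbv : b1 ∈ (fun g => b1 * g) '' (↑W : Set (Equiv.Perm (Fin n))) :=
    ⟨1, by simpa using hone, mul_one b1⟩
  rw [← hSval] at hbv
  obtain ⟨b, hbS, hb1⟩ := hbv
  have hbpl : b1 (pl hn) = i := by
    rw [← hb1]; exact (mem_layer_iff hn).1 (hS hbS)
  ext z1
  constructor
  · rintro ⟨z, ⟨hzL, hzS, x, hxS, hadj⟩, rfl⟩
    have hxv : x.1 ∈ Subtype.val '' S := ⟨x, hxS, rfl⟩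
    rw [hSval] at hxv
    obtain ⟨w, hw, hxw⟩ := hxv
    have hxw' : b1 * w = ↑x := hxw
    obtain ⟨g, hg0, hzx⟩ := (adj_layer hn (hS hxS) hzL).1 hadj.symm
    refine ⟨w * g, ?_, ?_⟩
    · rw [Finset.coe_sdiff]
      constructor
      · rw [Finset.coe_biUnion]
        refine Set.mem_biUnion hw ?_
        rw [Finset.mem_coe, mem_trG]
        exact ⟨g, (mem_G0 hn).2 hg0, rfl⟩
      · intro hmem
        apply hzS
        have : z.1 ∈ Subtype.val '' S := by
          rw [hSval]
          exact ⟨w * g, hmem, show b1 * (w * g) = ↑z by rw [← mul_assoc, hxw', ← hzx]⟩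
        obtain ⟨z', hz', hzz⟩ := this
        rwa [Subtype.val_injective hzz] at hz'
    · show b1 * (w * g) = ↑z
      rw [← mul_assoc, hxw', ← hzx]
  · rintro ⟨u, hu, rfl⟩
    rw [Finset.coe_sdiff] at hu
    obtain ⟨humem, hunW⟩ := hu
    rw [Finset.mem_coe, Finset.mem_biUnion] at humem
    obtain ⟨w, hw, hwg⟩ := humem
    rw [mem_trG] at hwg
    obtain ⟨g, hgG, rfl⟩ := hwg
    have hg0 : IsGen0 hn g := (mem_G0 hn).1 hgG
    have hsignb : Equiv.Perm.sign b1 = 1 := by rw [← hb1]; exact b.2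
    have hsignz : Equiv.Perm.sign (b1 * (w * g)) = 1 := by
      rw [Equiv.Perm.sign_mul, Equiv.Perm.sign_mul, hsignb, hWsign w hw,
        IsGen.sign hn (hg0.isGen hn)]
      norm_num
    refine ⟨⟨b1 * (w * g), hsignz⟩, ⟨?_, ?_, ?_⟩, rfl⟩
    · rw [mem_layer_iff hn]
      show (b1 * (w * g)) (pl hn) = i
      rw [Equiv.Perm.mul_apply, Equiv.Perm.mul_apply, IsGen0.fix_pl hn hg0, hWpl w hw, hbpl]
    · intro hmem
      have : (b1 * (w * g)) ∈ Subtype.val '' S := ⟨_, hmem, rfl⟩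
      rw [hSval] at this
      obtain ⟨w', hw', hww⟩ := this
      have : w' = w * g := mul_left_cancel hww
      rw [this] at hw'
      exact hunW hw'
    · -- adjacent to the vertex over b1 * w
      have hbw : b1 * w ∈ Subtype.val '' S := by
        rw [hSval]; exact ⟨w, hw, rfl⟩
      obtain ⟨x, hxS, hxv⟩ := hbw
      have hxv' : b1 * w = ↑x := hxv.symm
      refine ⟨x, hxS, ?_⟩
      have hadj : (AN n).Adj x ⟨b1 * (w * g), hsignz⟩ := by
        rw [adj_iff hn]
        exact ⟨g, hg0.isGen hn, show b1 * (w * g) = ↑x * g by rw [← mul_assoc, hxv']⟩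
      exact hadj.symm

end nbhd
section common
variable (hn : 6 ≤ n)

lemma trG_one (F : Finset (Equiv.Perm (Fin n))) : trG (1 : Equiv.Perm (Fin n)) F = F := by
  ext x
  rw [mem_trG]
  simp

lemma ncard_XF {h1 : 1 ≤ n} {i : Fin n} {S : Set (ANVertex n)} (hS : S ⊆ ANLayer n h1 i)
    {a b c : ANVertex n} (hSeq : S = {a, b, c}) {s t : Equiv.Perm (Fin n)}
    (hs0 : IsGen0 hn s) (ht0 : IsGen0 hn t)
    (has : a.1 = b.1 * s) (hct : c.1 = b.1 * t) :
    (layerNbhd n h1 i S).ncard = (XF hn s t).card := by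
  have hW1 : (1 : Equiv.Perm (Fin n)) ∈ ({1, s, t} : Finset (Equiv.Perm (Fin n))) := by simp
  have hWpl : ∀ w ∈ ({1, s, t} : Finset (Equiv.Perm (Fin n))), w (pl hn) = pl hn := by
    intro w hw
    simp only [Finset.mem_insert, Finset.mem_singleton] at hw
    rcases hw with rfl | rfl | rfl
    · simp
    · exact IsGen0.fix_pl hn hs0
    · exact IsGen0.fix_pl hn ht0
  have hWsign : ∀ w ∈ ({1, s, t} : Finset (Equiv.Perm (Fin n))), Equiv.Perm.sign w = 1 := by
    intro w hw
    simp only [Finset.mem_insert, Finset.mem_singleton] at hw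
    rcases hw with rfl | rfl | rfl
    · simp
    · exact IsGen.sign hn (hs0.isGen hn)
    · exact IsGen.sign hn (ht0.isGen hn)
  have hSval : Subtype.val '' S
      = (fun g => b.1 * g) '' ↑({1, s, t} : Finset (Equiv.Perm (Fin n))) := by
    rw [hSeq, Set.image_insert_eq, Set.image_insert_eq, Set.image_singleton]
    simp only [Finset.coe_insert, Finset.coe_singleton]
    rw [Set.image_insert_eq, Set.image_insert_eq, Set.image_singleton]
    simp only [mul_one]
    rw [has, hct]
    exact Set.insert_comm _ _ _
  have hval := nbhd_val hn hS b.1 {1, s, t} hW1 hWpl hWsign hSval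
  have hbiU : ({1, s, t} : Finset (Equiv.Perm (Fin n))).biUnion (fun w => trG w (G0 hn))
      \ {1, s, t} = XF hn s t := by
    rw [Finset.biUnion_insert, Finset.biUnion_insert, Finset.singleton_biUnion,
      trG_one, ← Finset.union_assoc]
    rfl
  rw [hbiU] at hval
  calc (layerNbhd n h1 i S).ncard
      = (Subtype.val '' layerNbhd n h1 i S).ncard :=
        (Set.ncard_image_of_injective _ Subtype.val_injective).symm
    _ = ((fun g => b.1 * g) '' ↑(XF hn s t)).ncard := by rw [hval]
    _ = (↑(XF hn s t) : Set (Equiv.Perm (Fin n))).ncard :=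
        Set.ncard_image_of_injective _ (mul_right_injective b.1)
    _ = (XF hn s t).card := Set.ncard_coe_finset _

lemma exists_adj_of_reachable {V : Type*} {G : SimpleGraph V} {u v : V}
    (h : G.Reachable u v) (hne : u ≠ v) : ∃ w, G.Adj u w := by
  obtain ⟨p⟩ := h
  cases p with
  | nil => exact absurd rfl hne
  | cons h _ => exact ⟨_, h⟩

end common
/-- For `n ≥ 6`, a connected induced subgraph `H` of `AN_n^i` with exactly `3`
vertices is either a `3`-cycle or a `2`-path; moreover `|N(H)| = 3n − 12` if `H` is
a `3`-cycle, and `3n − 11 ≤ |N(H)| ≤ 3n − 10` if `H` is a `2`-path. -/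
theorem AN_layer_subgraph_three (n : ℕ) (hn : 6 ≤ n) (i : Fin n)
    (S : Set (ANVertex n)) (hS : S ⊆ ANLayer n (by omega) i)
    (hcard : S.ncard = 3) (hconn : ((AN n).induce S).Connected) :
    (SetIsTriangle n S ∨ SetIsTwoPath n S) ∧
    (SetIsTriangle n S → (layerNbhd n (by omega) i S).ncard = 3 * n - 12) ∧
    (SetIsTwoPath n S →
      3 * n - 11 ≤ (layerNbhd n (by omega) i S).ncard ∧
      (layerNbhd n (by omega) i S).ncard ≤ 3 * n - 10) := by
  classical
  have key : ∀ u v : ANVertex n, u ∈ S → v ∈ S → u ≠ v →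
      ∃ w, w ∈ S ∧ (AN n).Adj u w := by
    intro u v hu hv huv
    have hr := hconn.preconnected ⟨u, hu⟩ ⟨v, hv⟩
    obtain ⟨w, hw⟩ := exists_adj_of_reachable hr (fun h => huv (congrArg Subtype.val h))
    exact ⟨w.1, w.2, hw⟩
  obtain ⟨a0, b0, c0, hab0, hac0, hbc0, hSeq0⟩ := Set.ncard_eq_three.1 hcard
  have ha0 : a0 ∈ S := by rw [hSeq0]; exact Set.mem_insert _ _
  have hb0 : b0 ∈ S := by rw [hSeq0]; exact Set.mem_insert_of_mem _ (Set.mem_insert _ _)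
  have hc0 : c0 ∈ S := by
    rw [hSeq0]; exact Set.mem_insert_of_mem _ (Set.mem_insert_of_mem _ rfl)
  have edge : ∀ u : ANVertex n, u ∈ S → ∀ p q : ANVertex n, p ∈ S → q ∈ S → u ≠ p →
      S = {u, p, q} → ((AN n).Adj u p ∨ (AN n).Adj u q) := by
    intro u hu p q hp hq hup hset
    obtain ⟨w, hwS, hadj⟩ := key u p hu hp hup
    rw [hset] at hwS
    rcases hwS with rfl | rfl | rfl
    · exact absurd hadj ((AN n).irrefl)
    · exact Or.inl hadj
    · exact Or.inr hadj
  have Ha : (AN n).Adj a0 b0 ∨ (AN n).Adj a0 c0 :=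
    edge a0 ha0 b0 c0 hb0 hc0 hab0 hSeq0
  have Hb : (AN n).Adj b0 a0 ∨ (AN n).Adj b0 c0 :=
    edge b0 hb0 a0 c0 ha0 hc0 (Ne.symm hab0)
      (by rw [hSeq0]; ext w; simp only [Set.mem_insert_iff, Set.mem_singleton_iff]; tauto)
  have Hc : (AN n).Adj c0 a0 ∨ (AN n).Adj c0 b0 :=
    edge c0 hc0 a0 b0 ha0 hb0 (Ne.symm hac0)
      (by rw [hSeq0]; ext w; simp only [Set.mem_insert_iff, Set.mem_singleton_iff]; tauto)
  obtain ⟨x, y, z, hSxyz, hxz, hxy, hyz⟩ :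
      ∃ x y z : ANVertex n, S = {x, y, z} ∧ x ≠ z ∧ (AN n).Adj x y ∧ (AN n).Adj y z := by
    by_cases h1 : (AN n).Adj a0 b0
    · by_cases h2 : (AN n).Adj b0 c0
      · exact ⟨a0, b0, c0, hSeq0, hac0, h1, h2⟩
      · have h3 : (AN n).Adj c0 a0 := by
          rcases Hc with h | h
          · exact h
          · exact absurd h.symm h2
        refine ⟨b0, a0, c0, ?_, hbc0, h1.symm, h3.symm⟩
        rw [hSeq0]; ext w
        simp only [Set.mem_insert_iff, Set.mem_singleton_iff]; tauto
    · have h4 : (AN n).Adj a0 c0 := by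
        rcases Ha with h | h
        · exact absurd h h1
        · exact h
      have h5 : (AN n).Adj b0 c0 := by
        rcases Hb with h | h
        · exact absurd h.symm h1
        · exact h
      refine ⟨a0, c0, b0, ?_, hab0, h4, h5.symm⟩
      rw [hSeq0]; ext w
      simp only [Set.mem_insert_iff, Set.mem_singleton_iff]; tauto
  refine ⟨?_, ?_, ?_⟩
  · by_cases hadj : (AN n).Adj x z
    · exact Or.inl ⟨x, y, z, hSxyz, hxy, hyz, hadj⟩
    · exact Or.inr ⟨x, y, z, hSxyz, hxz, hxy, hyz, hadj⟩
  · rintro ⟨a, b, c, hSeq, hab, hbc, hac⟩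
    have ha : a ∈ S := by rw [hSeq]; exact Set.mem_insert _ _
    have hb : b ∈ S := by rw [hSeq]; exact Set.mem_insert_of_mem _ (Set.mem_insert _ _)
    have hc : c ∈ S := by
      rw [hSeq]; exact Set.mem_insert_of_mem _ (Set.mem_insert_of_mem _ rfl)
    obtain ⟨s, hs0, has⟩ := (adj_layer hn (hS hb) (hS ha)).1 hab.symm
    obtain ⟨t, ht0, hct⟩ := (adj_layer hn (hS hb) (hS hc)).1 hbc
    obtain ⟨u, hu0, hcu⟩ := (adj_layer hn (hS ha) (hS hc)).1 hac
    have et : t = s * u := by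
      apply mul_left_cancel (a := b.1)
      rw [← hct, hcu, has, mul_assoc]
    have hcount := ncard_XF hn hS hSeq hs0 ht0 has hct
    rcases prod_of_gens hn hs0 ht0 (hu0.isGen hn) et with ⟨rfl, rfl⟩ | ⟨rfl, rfl⟩
    · rw [hcount, cardXT hn]
    · rw [hcount, XF_comm hn, cardXT hn]
  · rintro ⟨a, b, c, hSeq, hacne, hab, hbc, hnac⟩
    have ha : a ∈ S := by rw [hSeq]; exact Set.mem_insert _ _
    have hb : b ∈ S := by rw [hSeq]; exact Set.mem_insert_of_mem _ (Set.mem_insert _ _)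
    have hc : c ∈ S := by
      rw [hSeq]; exact Set.mem_insert_of_mem _ (Set.mem_insert_of_mem _ rfl)
    obtain ⟨s, hs0, has⟩ := (adj_layer hn (hS hb) (hS ha)).1 hab.symm
    obtain ⟨t, ht0, hct⟩ := (adj_layer hn (hS hb) (hS hc)).1 hbc
    have hst : s ≠ t := by
      rintro rfl
      exact hacne (Subtype.ext (by rw [has, hct]))
    have noadj : ∀ g, IsGen0 hn g → c.1 ≠ a.1 * g := by
      intro g hg0 e
      exact hnac ((adj_layer hn (hS ha) (hS hc)).2 ⟨g, hg0, e⟩)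
    have hkey : c.1 = a.1 * (s⁻¹ * t) := by
      rw [has, hct]; group
    have hcount := ncard_XF hn hS hSeq hs0 ht0 has hct
    have hbound : (XF hn s t).card = 3 * n - 11 ∨ (XF hn s t).card = 3 * n - 10 := by
      rcases hs0 with hs | hs | ⟨l, hl, hl2, rfl⟩
      · -- s = rot
        rcases ht0 with ht | ht | ⟨m, hm, hm2, rfl⟩
        · exact absurd (hs.trans ht.symm) hst
        · exfalso
          subst hs; subst ht
          have e : c.1 = a.1 * rot hn := by rw [hkey, rotinv_rotinv hn]
          exact noadj _ (Or.inl rfl) e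
        · subst hs
          exact Or.inl (cardXA hn (Or.inl rfl) hm hm2)
      · -- s = rot⁻¹
        rcases ht0 with ht | ht | ⟨m, hm, hm2, rfl⟩
        · exfalso
          subst hs; subst ht
          have e : c.1 = a.1 * (rot hn)⁻¹ := by rw [hkey, inv_inv, rot_rot hn]
          exact noadj _ (Or.inr (Or.inl rfl)) e
        · exact absurd (hs.trans ht.symm) hst
        · subst hs
          exact Or.inl (cardXA hn (Or.inr rfl) hm hm2)
      · -- s = tau l
        rcases ht0 with ht | ht | ⟨m, hm, hm2, rfl⟩
        · subst ht
          exact Or.inl (by rw [XF_comm hn]; exact cardXA hn (Or.inl rfl) hl hl2)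
        · subst ht
          exact Or.inl (by rw [XF_comm hn]; exact cardXA hn (Or.inr rfl) hl hl2)
        · have hlm : l ≠ m := by
            rintro rfl
            exact hst rfl
          exact Or.inr (cardXB hn hl hl2 hm hm2 hlm)
    rcases hbound with h | h <;> rw [hcount, h] <;> omega
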